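/- Let θ = a/b be rational with gcd-reduced b ≥ 1. Define π(U) = z₁ · Σ_{k=1}^b e^{2πi a k / b} e_{k,k} and π(V) = z₂ · Σ_{k=1}^b e_{k, k−1 (mod b)} in C(𝕋²) ⊗ M_b, where z₁, z₂ are the coordinate functions on 𝕋² and e_{k,l} the matrix units of M_b. Then π(U), π(V) are unitaries satisfying π(U)π(V) = e^{2πi a/b} π(V)π(U), and the induced *-homomorphism π : A_{a/b} → C(𝕋²) ⊗ M_b is trace-preserving, where C(𝕋²) ⊗ M_b carries the trace given by Haar integration tensored with the normalized matrix trace. -/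

import Mathlib

open Complex
open scoped Matrix.Norms.L2Operator

/-- The 2-torus `𝕋²`. -/
abbrev TwoTorus := AddCircle (1 : ℝ) × AddCircle (1 : ℝ)

/-- `π(U) = z₁ · Σ_{k=1}^b e^{2πiak/b} e_{k,k}` as a continuous matrix-valued function
on `𝕋²`, an element of `C(𝕋²) ⊗ M_b = C(𝕋², M_b)`. -/
noncomputable def ratP (a : ℤ) (b : ℕ) [NeZero b] :
    C(TwoTorus, Matrix (Fin b) (Fin b) ℂ) :=
  ⟨fun t => fourier 1 t.1 •
      Matrix.diagonal (fun k : Fin b =>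
        Complex.exp (2 * Real.pi * I * a * ((k : ℕ) + 1) / b)),
    (((fourier 1).continuous.comp continuous_fst).smul continuous_const)⟩

/-- `π(V) = z₂ · Σ_{k=1}^b e_{k,k−1 (mod b)}` as an element of `C(𝕋², M_b)`. -/
noncomputable def ratQ (b : ℕ) [NeZero b] :
    C(TwoTorus, Matrix (Fin b) (Fin b) ℂ) :=
  ⟨fun t => fourier 1 t.2 •
      Matrix.of (fun k l : Fin b => if k = l + 1 then (1 : ℂ) else 0),
    (((fourier 1).continuous.comp continuous_snd).smul continuous_const)⟩

/-- The trace: Haar integration on `𝕋²` tensored with the normalized matrix trace. -/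
noncomputable def ratTrace (b : ℕ) (x : C(TwoTorus, Matrix (Fin b) (Fin b) ℂ)) : ℂ :=
  (∫ t : TwoTorus, Matrix.trace (x t)) / b

section Aux

open MeasureTheory
open scoped Matrix


noncomputable def Dmat (a : ℤ) (b : ℕ) : Matrix (Fin b) (Fin b) ℂ :=
  Matrix.diagonal (fun k : Fin b => Complex.exp (2 * Real.pi * I * a * ((k : ℕ) + 1) / b))

def Smat (b : ℕ) [NeZero b] : Matrix (Fin b) (Fin b) ℂ :=
  Matrix.of (fun k l : Fin b => if k = l + 1 then (1 : ℂ) else 0)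

lemma conj_aux (a : ℤ) (b : ℕ) (k : Fin b) :
    (starRingEnd ℂ) (2 * Real.pi * I * a * ((k : ℕ) + 1) / b)
      = -(2 * Real.pi * I * a * ((k : ℕ) + 1) / b) := by
  simp [map_div₀, map_mul, Complex.conj_I, map_ofNat]
  ring

lemma star_d_mul (a : ℤ) (b : ℕ) (k : Fin b) :
    star (Complex.exp (2 * Real.pi * I * a * ((k : ℕ) + 1) / b)) *
      Complex.exp (2 * Real.pi * I * a * ((k : ℕ) + 1) / b) = 1 := by
  rw [Complex.star_def, ← Complex.exp_conj, ← Complex.exp_add, conj_aux, neg_add_cancel,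
    Complex.exp_zero]

lemma Dstar_mul (a : ℤ) (b : ℕ) : (Dmat a b)ᴴ * Dmat a b = 1 := by
  ext i j
  rw [Dmat, Matrix.diagonal_conjTranspose, Matrix.diagonal_mul_diagonal,
    Matrix.diagonal_apply, Matrix.one_apply]
  by_cases h : i = j
  · simp only [h, if_true]
    exact star_d_mul a b j
  · simp [h]

lemma Dmul_star (a : ℤ) (b : ℕ) : Dmat a b * (Dmat a b)ᴴ = 1 := by
  ext i j
  rw [Dmat, Matrix.diagonal_conjTranspose, Matrix.diagonal_mul_diagonal,
    Matrix.diagonal_apply, Matrix.one_apply]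
  by_cases h : i = j
  · simp only [h, if_true]
    rw [mul_comm]
    exact star_d_mul a b j
  · simp [h]

lemma Sstar_mul (b : ℕ) [NeZero b] : (Smat b)ᴴ * Smat b = 1 := by
  ext i j
  simp only [Matrix.mul_apply, Matrix.conjTranspose_apply, Smat, Matrix.of_apply,
    apply_ite (star : ℂ → ℂ), star_one, star_zero, ite_mul, one_mul, zero_mul, Finset.sum_ite_eq',
    Finset.mem_univ, if_true, Matrix.one_apply]
  simp [eq_comm]
lemma Smul_star (b : ℕ) [NeZero b] : Smat b * (Smat b)ᴴ = 1 := by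
  ext i j
  have hc : ∀ x k : Fin b, (x = k + 1) = (k = x - 1) := by
    intro x k
    simp only [eq_iff_iff]
    constructor
    · rintro rfl; simp
    · rintro rfl; simp
  simp only [Matrix.mul_apply, Matrix.conjTranspose_apply, Smat, Matrix.of_apply,
    apply_ite (star : ℂ → ℂ), star_one, star_zero, hc, mul_ite, mul_one, mul_zero, ite_mul, one_mul, zero_mul,
    Finset.sum_ite_eq', Finset.mem_univ, if_true, Matrix.one_apply]
  simp [eq_comm, sub_left_inj]

lemma exp_mod_aux (a : ℤ) (b : ℕ) [NeZero b] (N : ℕ) :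
    Complex.exp (2 * Real.pi * I * a * (((N % b : ℕ) : ℂ) + 1) / b)
      = Complex.exp (2 * Real.pi * I * a * ((N : ℂ) + 1) / b) := by
  have hb : (b : ℂ) ≠ 0 := Nat.cast_ne_zero.mpr (NeZero.ne b)
  set r := N % b with hr0
  set c := N / b with hc0
  have h0 : (r : ℂ) + b * c = N := by
    exact_mod_cast congrArg (Nat.cast : ℕ → ℂ) (Nat.mod_add_div N b)
  rw [show 2 * (Real.pi : ℂ) * I * a * ((r : ℂ) + 1) / b
      = 2 * (Real.pi : ℂ) * I * a * ((N : ℂ) + 1) / b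
        + ((-(a * c) : ℤ) : ℂ) * (2 * Real.pi * I) by
    push_cast
    rw [div_eq_iff hb, add_mul, div_mul_cancel₀ _ hb]
    linear_combination (2 * (Real.pi : ℂ) * I * a) * h0]
  rw [Complex.exp_add, Complex.exp_int_mul_two_pi_mul_I, mul_one]

lemma dnext (a : ℤ) (b : ℕ) [NeZero b] (j : Fin b) :
    Complex.exp (2 * Real.pi * I * a * (((j + 1 : Fin b) : ℕ) + 1) / b)
      = Complex.exp (2 * Real.pi * I * ((a : ℝ) / b))
        * Complex.exp (2 * Real.pi * I * a * ((j : ℕ) + 1) / b) := by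
  have hb : (b : ℂ) ≠ 0 := Nat.cast_ne_zero.mpr (NeZero.ne b)
  have hv : ((j + 1 : Fin b) : ℕ) = ((j : ℕ) + 1) % b := by
    rw [Fin.val_add, Fin.val_one', Nat.add_mod ((j : ℕ)) (1 % b), Nat.mod_mod_of_dvd _ dvd_rfl,
      ← Nat.add_mod]
  rw [hv]
  have h := exp_mod_aux a b ((j : ℕ) + 1)
  push_cast at h ⊢
  rw [h, ← Complex.exp_add]
  congr 1
  field_simp
  ring


/-- `fourier m` integrates to `0` on the circle unless `m = 0`. -/
lemma integral_fourier_circle (m : ℤ) :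
    (∫ x : AddCircle (1:ℝ), fourier m x) = if m = 0 then 1 else 0 := by
  split_ifs with hm
  · subst hm
    simp [measureReal_def, AddCircle.measure_univ]
  · have h2 : (∫ x : AddCircle (1:ℝ), fourier m x)
        = ∫ x : AddCircle (1:ℝ), fourier m ((((1:ℝ) / 2 / (m:ℝ) : ℝ) : AddCircle (1:ℝ)) + x) := by
      rw [integral_add_left_eq_self (μ := volume) (fun x => (fourier m x : ℂ))]
    have h := fun x : AddCircle (1:ℝ) => fourier_add_half_inv_index (T := (1:ℝ)) hm one_pos x
    simp only [add_comm, h, integral_neg] at h2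
    exact self_eq_neg.mp h2

lemma fourier_pow_aux (j : ℤ) (k : ℕ) (x : AddCircle (1:ℝ)) :
    (fourier j x) ^ k = fourier (j * k) x := by
  induction k with
  | zero => simp
  | succ k ih =>
    rw [pow_succ, ih, ← fourier_add]
    congr 1
    push_cast
    ring

lemma conj_fourier (x : AddCircle (1:ℝ)) :
    star (fourier 1 x : ℂ) = fourier (-1) x := by
  rw [Complex.star_def, ← fourier_neg]

/-- If a unitary element of `C(𝕋², M_b)` has the form `t ↦ fourier 1 (g t) • M₀`, then its
`m`-th integer power has the form `t ↦ fourier m (g t) • M` for some constant matrix `M`. -/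
lemma zpow_form {b : ℕ} [NeZero b] (u : unitary C(TwoTorus, Matrix (Fin b) (Fin b) ℂ))
    (g : TwoTorus → AddCircle (1:ℝ)) (M0 : Matrix (Fin b) (Fin b) ℂ)
    (hu : ∀ t, ((u : C(TwoTorus, Matrix (Fin b) (Fin b) ℂ)) t) = fourier 1 (g t) • M0)
    (m : ℤ) :
    ∃ M : Matrix (Fin b) (Fin b) ℂ,
      ∀ t, (((u ^ m : unitary C(TwoTorus, Matrix (Fin b) (Fin b) ℂ)) :
        C(TwoTorus, Matrix (Fin b) (Fin b) ℂ)) t) = fourier m (g t) • M := by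
  cases m with
  | ofNat k =>
    refine ⟨M0 ^ k, fun t => ?_⟩
    rw [Int.ofNat_eq_coe, zpow_natCast, SubmonoidClass.coe_pow, ContinuousMap.pow_apply, hu,
      smul_pow, fourier_pow_aux, one_mul]
  | negSucc k =>
    refine ⟨(M0ᴴ) ^ (k + 1), fun t => ?_⟩
    rw [zpow_negSucc, ← Unitary.star_eq_inv, Unitary.coe_star, SubmonoidClass.coe_pow,
      star_pow, ContinuousMap.pow_apply]
    have h2 : (star (u : C(TwoTorus, Matrix (Fin b) (Fin b) ℂ))) t
        = star ((u : C(TwoTorus, Matrix (Fin b) (Fin b) ℂ)) t) := rfl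
    rw [h2, hu t, star_smul, conj_fourier, Matrix.star_eq_conjTranspose, smul_pow,
      fourier_pow_aux]
    congr 2
    rw [Int.negSucc_eq]
    push_cast
    ring

lemma fourier_mul_fourier_neg (x : AddCircle (1:ℝ)) :
    (fourier (-1) x : ℂ) * fourier 1 x = 1 := by
  rw [← fourier_add]
  norm_num

lemma DS_comm (a : ℤ) (b : ℕ) [NeZero b] :
    Dmat a b * Smat b
      = Complex.exp (2 * Real.pi * I * ((a : ℝ) / b)) • (Smat b * Dmat a b) := by
  ext i j
  rw [Dmat, Smat, Matrix.smul_apply, Matrix.diagonal_mul, Matrix.mul_diagonal]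
  simp only [Matrix.of_apply]
  by_cases h : i = j + 1
  · subst h
    rw [if_pos rfl, mul_one, one_mul, smul_eq_mul]
    exact dnext a b j
  · simp [h]

lemma mem_unitary_of_form {b : ℕ} [NeZero b] (f : C(TwoTorus, Matrix (Fin b) (Fin b) ℂ))
    (g : TwoTorus → AddCircle (1:ℝ)) (M0 : Matrix (Fin b) (Fin b) ℂ)
    (hf : ∀ t, f t = fourier 1 (g t) • M0) (h1 : M0ᴴ * M0 = 1) (h2 : M0 * M0ᴴ = 1) :
    f ∈ unitary C(TwoTorus, Matrix (Fin b) (Fin b) ℂ) := by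
  constructor
  · ext t
    have hs : (star f * f) t = star (f t) * f t := rfl
    rw [hs, hf, star_smul, conj_fourier, Matrix.star_eq_conjTranspose, Matrix.smul_mul,
      Matrix.mul_smul, smul_smul, fourier_mul_fourier_neg, h1, one_smul, ContinuousMap.one_apply]
  · ext t
    have hs : (f * star f) t = f t * star (f t) := rfl
    rw [hs, hf, star_smul, conj_fourier, Matrix.star_eq_conjTranspose, Matrix.smul_mul,
      Matrix.mul_smul, smul_smul, mul_comm ((fourier 1 (g t) : ℂ)), fourier_mul_fourier_neg,
      h2, one_smul, ContinuousMap.one_apply]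

lemma ratPQ_comm (a : ℤ) (b : ℕ) [NeZero b] :
    ratP a b * ratQ b
      = Complex.exp (2 * Real.pi * I * ((a : ℝ) / b)) • (ratQ b * ratP a b) := by
  ext t
  have h1 : (ratP a b * ratQ b) t = (fourier 1 t.1 • Dmat a b) * (fourier 1 t.2 • Smat b) := rfl
  have h2 : (Complex.exp (2 * Real.pi * I * ((a : ℝ) / b)) • (ratQ b * ratP a b)) t
      = Complex.exp (2 * Real.pi * I * ((a : ℝ) / b)) •
          ((fourier 1 t.2 • Smat b) * (fourier 1 t.1 • Dmat a b)) := rfl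
  rw [h1, h2, Matrix.smul_mul, Matrix.mul_smul, smul_smul, DS_comm, Matrix.smul_mul,
    Matrix.mul_smul, smul_smul, smul_smul, smul_smul]
  ring_nf

lemma trace_key (a : ℤ) (b : ℕ) [NeZero b]
    (uP uQ : unitary C(TwoTorus, Matrix (Fin b) (Fin b) ℂ))
    (hP : ∀ t, ((uP : C(TwoTorus, Matrix (Fin b) (Fin b) ℂ)) t) = fourier 1 t.1 • Dmat a b)
    (hQ : ∀ t, ((uQ : C(TwoTorus, Matrix (Fin b) (Fin b) ℂ)) t) = fourier 1 t.2 • Smat b)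
    (m n : ℤ) :
    ratTrace b (((uP ^ m * uQ ^ n : unitary C(TwoTorus, Matrix (Fin b) (Fin b) ℂ)) :
        C(TwoTorus, Matrix (Fin b) (Fin b) ℂ)))
      = if m = 0 ∧ n = 0 then 1 else 0 := by
  have hb : (b : ℂ) ≠ 0 := Nat.cast_ne_zero.mpr (NeZero.ne b)
  have hvol : (volume : Measure TwoTorus) Set.univ = 1 := by
    rw [Measure.volume_eq_prod, ← Set.univ_prod_univ, Measure.prod_prod,
      AddCircle.measure_univ]
    simp
  by_cases h : m = 0 ∧ n = 0
  · obtain ⟨rfl, rfl⟩ := h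
    rw [if_pos ⟨rfl, rfl⟩, zpow_zero, zpow_zero, one_mul, OneMemClass.coe_one]
    unfold ratTrace
    have ht : ∀ t : TwoTorus, Matrix.trace ((1 : C(TwoTorus, Matrix (Fin b) (Fin b) ℂ)) t)
        = (b : ℂ) := by
      intro t
      rw [ContinuousMap.one_apply, Matrix.trace_one]
      simp
    simp only [ht]
    rw [integral_const, measureReal_def, hvol, ENNReal.toReal_one, one_smul, div_self hb]
  · rw [if_neg h]
    obtain ⟨M1, hM1⟩ := zpow_form uP _ _ hP m
    obtain ⟨M2, hM2⟩ := zpow_form uQ _ _ hQ n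
    unfold ratTrace
    have hpt : ∀ t : TwoTorus,
        Matrix.trace (((uP ^ m * uQ ^ n : unitary C(TwoTorus, Matrix (Fin b) (Fin b) ℂ)) :
          C(TwoTorus, Matrix (Fin b) (Fin b) ℂ)) t)
        = ((fourier m t.1 : ℂ) * fourier n t.2) • Matrix.trace (M1 * M2) := by
      intro t
      have hm : ((uP ^ m * uQ ^ n : unitary C(TwoTorus, Matrix (Fin b) (Fin b) ℂ)) :
          C(TwoTorus, Matrix (Fin b) (Fin b) ℂ)) t
          = ((uP ^ m : unitary C(TwoTorus, Matrix (Fin b) (Fin b) ℂ)) :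
              C(TwoTorus, Matrix (Fin b) (Fin b) ℂ)) t *
            ((uQ ^ n : unitary C(TwoTorus, Matrix (Fin b) (Fin b) ℂ)) :
              C(TwoTorus, Matrix (Fin b) (Fin b) ℂ)) t := rfl
      rw [hm, hM1, hM2, Matrix.smul_mul, Matrix.mul_smul, smul_smul, Matrix.trace_smul]
    simp only [hpt]
    rw [integral_smul_const, Measure.volume_eq_prod,
      integral_prod_mul (fun x => (fourier m x : ℂ)) (fun y => (fourier n y : ℂ)),
      integral_fourier_circle, integral_fourier_circle]
    rcases not_and_or.mp h with hm0 | hn0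
    · rw [if_neg hm0, zero_mul, zero_smul, zero_div]
    · rw [if_neg hn0, mul_zero, zero_smul, zero_div]

end Aux


/-- for rational `θ = a/b` (reduced, `b ≥ 1`), the elements
`ratP a b` and `ratQ b` of `C(𝕋²) ⊗ M_b` are unitaries satisfying
`P Q = e^{2πia/b} Q P`, and the induced *-homomorphism `π : A_{a/b} → C(𝕋²) ⊗ M_b`
(from the universal property of `A_{a/b}`, sending `U ↦ P`, `V ↦ Q`) is
trace-preserving, where the trace on the target is Haar integration tensored with the
normalized matrix trace. -/
theorem rational_quantum_torus_embedding
    (a : ℤ) (b : ℕ) [NeZero b] (hcop : Nat.Coprime a.natAbs b)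
    (A : Type) [NormedRing A] [StarRing A] [CStarRing A] [NormedAlgebra ℂ A]
    [StarModule ℂ A] [CompleteSpace A]
    (U V : unitary A)
    (hrel : (U : A) * V =
      Complex.exp (2 * Real.pi * I * ((a : ℝ) / b)) • ((V : A) * (U : A)))
    (huniv : ∀ (B : Type) [NormedRing B] [StarRing B] [CStarRing B]
      [NormedAlgebra ℂ B] [StarModule ℂ B] [CompleteSpace B],
      ∀ u v : unitary B,
      ((u : B) * v = Complex.exp (2 * Real.pi * I * ((a : ℝ) / b)) • ((v : B) * (u : B))) →
      ∃ φ : A →⋆ₐ[ℂ] B, φ U = u ∧ φ V = v)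
    (τ : A →ₗ[ℂ] ℂ)
    (hcanonical : ∀ m n : ℤ,
      τ (((U ^ m * V ^ n : unitary A) : A)) = if m = 0 ∧ n = 0 then 1 else 0) :
    (ratP a b ∈ unitary C(TwoTorus, Matrix (Fin b) (Fin b) ℂ)) ∧
    (ratQ b ∈ unitary C(TwoTorus, Matrix (Fin b) (Fin b) ℂ)) ∧
    (ratP a b * ratQ b =
      Complex.exp (2 * Real.pi * I * ((a : ℝ) / b)) • (ratQ b * ratP a b)) ∧
    ∃ π : A →⋆ₐ[ℂ] C(TwoTorus, Matrix (Fin b) (Fin b) ℂ),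
      π U = ratP a b ∧ π V = ratQ b ∧
      ∀ m n : ℤ, ratTrace b (π (((U ^ m * V ^ n : unitary A) : A)))
        = τ (((U ^ m * V ^ n : unitary A) : A)) := by
  have hPmem : ratP a b ∈ unitary C(TwoTorus, Matrix (Fin b) (Fin b) ℂ) :=
    mem_unitary_of_form (ratP a b) (fun t => t.1) (Dmat a b) (fun _ => rfl)
      (Dstar_mul a b) (Dmul_star a b)
  have hQmem : ratQ b ∈ unitary C(TwoTorus, Matrix (Fin b) (Fin b) ℂ) :=
    mem_unitary_of_form (ratQ b) (fun t => t.2) (Smat b) (fun _ => rfl)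
      (Sstar_mul b) (Smul_star b)
  have hcomm := ratPQ_comm a b
  refine ⟨hPmem, hQmem, hcomm, ?_⟩
  obtain ⟨φ, hU, hV⟩ := huniv (C(TwoTorus, Matrix (Fin b) (Fin b) ℂ))
    ⟨ratP a b, hPmem⟩ ⟨ratQ b, hQmem⟩ hcomm
  refine ⟨φ, hU, hV, fun m n => ?_⟩
  rw [hcanonical]
  have hmap : φ (((U ^ m * V ^ n : unitary A) : A))
      = ((Unitary.map (StarMonoidHom.ofClass φ) (U ^ m * V ^ n) : unitary C(TwoTorus, Matrix (Fin b) (Fin b) ℂ)) :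
          C(TwoTorus, Matrix (Fin b) (Fin b) ℂ)) := rfl
  have hmap2 : Unitary.map (StarMonoidHom.ofClass φ) (U ^ m * V ^ n)
      = (Unitary.map (StarMonoidHom.ofClass φ) U) ^ m * (Unitary.map (StarMonoidHom.ofClass φ) V) ^ n := by
    rw [map_mul, map_zpow, map_zpow]
  rw [hmap, hmap2]
  have hPc : ((Unitary.map (StarMonoidHom.ofClass φ) U : unitary C(TwoTorus, Matrix (Fin b) (Fin b) ℂ)) :
      C(TwoTorus, Matrix (Fin b) (Fin b) ℂ)) = ratP a b := hU
  have hQc : ((Unitary.map (StarMonoidHom.ofClass φ) V : unitary C(TwoTorus, Matrix (Fin b) (Fin b) ℂ)) :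
      C(TwoTorus, Matrix (Fin b) (Fin b) ℂ)) = ratQ b := hV
  exact trace_key a b (Unitary.map (StarMonoidHom.ofClass φ) U) (Unitary.map (StarMonoidHom.ofClass φ) V)
    (fun t => by rw [hPc]; rfl) (fun t => by rw [hQc]; rfl) m n
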